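/- Let X ⊆ ℝ^d be a finite set, C ⊆ ℝ^d a finite nonempty set with cost(X,C) > 0, and P ⊆ X a nonempty subset. Define H̃(P,C) := cost(P,C) if P ∩ C ≠ ∅ and H̃(P,C) := 5·OPT_1(P) otherwise. If a random point c ∈ X is chosen with probability Pr(c = x) = cost(x,C)/cost(X,C), then Σ_{x∈X} (cost(x,C)/cost(X,C)) · H̃(P, C ∪ {x}) ≤ H̃(P,C). -/

import Mathlib

open Finset
open scoped Classical

/-- `ptCost x C` is `cost(x, C) = min_{c ∈ C} ‖x - c‖²`. -/
noncomputable def ptCost {d : ℕ} (x : EuclideanSpace ℝ (Fin d))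
    (C : Finset (EuclideanSpace ℝ (Fin d))) : ℝ :=
  sInf ((fun c => ‖x - c‖ ^ 2) '' (C : Set (EuclideanSpace ℝ (Fin d))))

/-- `setCost Y C` is `cost(Y, C) = Σ_{x ∈ Y} cost(x, C)`. -/
noncomputable def setCost {d : ℕ} (Y C : Finset (EuclideanSpace ℝ (Fin d))) : ℝ :=
  ∑ x ∈ Y, ptCost x C

/-- The centroid `μ = (Σ_{y ∈ Y} y) / |Y|` of a finite set. -/
noncomputable def centroid {d : ℕ} (Y : Finset (EuclideanSpace ℝ (Fin d))) :
    EuclideanSpace ℝ (Fin d) :=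
  (Y.card : ℝ)⁻¹ • ∑ y ∈ Y, y

/-- `opt1 Y = OPT₁(Y) = Σ_{y ∈ Y} ‖y - μ‖²`. -/
noncomputable def opt1 {d : ℕ} (Y : Finset (EuclideanSpace ℝ (Fin d))) : ℝ :=
  ∑ y ∈ Y, ‖y - centroid Y‖ ^ 2

/-- `H̃(P, C)`: the cost `cost(P, C)` if `P` is covered by `C`, and `5·OPT₁(P)` otherwise. -/
noncomputable def hTilde {d : ℕ} (P C : Finset (EuclideanSpace ℝ (Fin d))) : ℝ :=
  if (P ∩ C).Nonempty then setCost P C else 5 * opt1 P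

section helpers
variable {d : ℕ}

lemma ptCost_bdd (x : EuclideanSpace ℝ (Fin d)) (C : Finset (EuclideanSpace ℝ (Fin d))) :
    BddBelow ((fun c => ‖x - c‖ ^ 2) '' (C : Set (EuclideanSpace ℝ (Fin d)))) := by
  refine ⟨0, ?_⟩
  rintro r ⟨c, _, rfl⟩
  positivity

lemma ptCost_nonneg (x : EuclideanSpace ℝ (Fin d)) (C : Finset (EuclideanSpace ℝ (Fin d))) :
    0 ≤ ptCost x C := by
  apply Real.sInf_nonneg
  rintro r ⟨c, _, rfl⟩
  positivity

lemma ptCost_le (x : EuclideanSpace ℝ (Fin d)) {C : Finset (EuclideanSpace ℝ (Fin d))}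
    {c : EuclideanSpace ℝ (Fin d)} (hc : c ∈ C) : ptCost x C ≤ ‖x - c‖ ^ 2 :=
  csInf_le (ptCost_bdd x C) ⟨c, by simpa using hc, rfl⟩

lemma ptCost_mono (x : EuclideanSpace ℝ (Fin d)) {C C' : Finset (EuclideanSpace ℝ (Fin d))}
    (hC : C.Nonempty) (h : C ⊆ C') : ptCost x C' ≤ ptCost x C :=
  csInf_le_csInf (ptCost_bdd x C') ((Finset.coe_nonempty.mpr hC).image _)
    (Set.image_mono (Finset.coe_subset.mpr h))

lemma ptCost_exists_sqrt {C : Finset (EuclideanSpace ℝ (Fin d))} (hC : C.Nonempty)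
    (y : EuclideanSpace ℝ (Fin d)) :
    ∃ β : ℝ, 0 ≤ β ∧ ptCost y C = β ^ 2 ∧
      ∀ x, ptCost x C ≤ (β + ‖x - y‖) ^ 2 := by
  have hne : ((fun c => ‖y - c‖ ^ 2) '' (C : Set (EuclideanSpace ℝ (Fin d)))).Nonempty :=
    (Finset.coe_nonempty.mpr hC).image _
  have hfin : ((fun c => ‖y - c‖ ^ 2) '' (C : Set (EuclideanSpace ℝ (Fin d)))).Finite :=
    (C.finite_toSet).image _
  obtain ⟨c, hc, hcy⟩ := hne.csInf_mem hfin
  refine ⟨‖y - c‖, norm_nonneg _, by rw [ptCost, ← hcy], fun x => ?_⟩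
  have hle : ptCost x C ≤ ‖x - c‖ ^ 2 := csInf_le (ptCost_bdd x C) ⟨c, hc, rfl⟩
  have htri : ‖x - c‖ ≤ ‖y - c‖ + ‖x - y‖ := by
    have hxc : x - c = (x - y) + (y - c) := by abel
    calc ‖x - c‖ = ‖(x - y) + (y - c)‖ := by rw [← hxc]
      _ ≤ ‖x - y‖ + ‖y - c‖ := norm_add_le _ _
      _ = ‖y - c‖ + ‖x - y‖ := add_comm _ _
  calc ptCost x C ≤ ‖x - c‖ ^ 2 := hle
    _ ≤ (‖y - c‖ + ‖x - y‖) ^ 2 := pow_le_pow_left₀ (norm_nonneg _) htri 2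

lemma setCost_mono (P : Finset (EuclideanSpace ℝ (Fin d)))
    {C C' : Finset (EuclideanSpace ℝ (Fin d))} (hC : C.Nonempty) (h : C ⊆ C') :
    setCost P C' ≤ setCost P C :=
  Finset.sum_le_sum fun x _ => ptCost_mono x hC h

lemma pair_ordered (α β t : ℝ) (hα : 0 ≤ α) (ht : 0 ≤ t) (hαβ : α ≤ β) (h2 : β ≤ α + t) :
    α ^ 2 * min (β ^ 2) (t ^ 2) + β ^ 2 * min (α ^ 2) (t ^ 2) ≤ 5 * (α ^ 2 * t ^ 2) := by
  have hβ : 0 ≤ β := le_trans hα hαβ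
  have h1 : α ^ 2 * min (β ^ 2) (t ^ 2) ≤ α ^ 2 * t ^ 2 :=
    mul_le_mul_of_nonneg_left (min_le_right _ _) (sq_nonneg α)
  have h2' : β ^ 2 * min (α ^ 2) (t ^ 2) ≤ 4 * (α ^ 2 * t ^ 2) := by
    rcases le_total α t with h | h
    · rw [min_eq_left (pow_le_pow_left₀ hα h 2)]
      have hb : β ^ 2 ≤ 4 * t ^ 2 := by nlinarith
      nlinarith [mul_le_mul_of_nonneg_right hb (sq_nonneg α)]
    · rw [min_eq_right (pow_le_pow_left₀ ht h 2)]
      have hb : β ^ 2 ≤ 4 * α ^ 2 := by nlinarith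
      nlinarith [mul_le_mul_of_nonneg_right hb (sq_nonneg t)]
  linarith

lemma pair_bound (α β t : ℝ) (hα : 0 ≤ α) (hβ : 0 ≤ β) (ht : 0 ≤ t)
    (h1 : α ≤ β + t) (h2 : β ≤ α + t) :
    α ^ 2 * min (β ^ 2) (t ^ 2) + β ^ 2 * min (α ^ 2) (t ^ 2)
      ≤ 5 * (min (α ^ 2) (β ^ 2) * t ^ 2) := by
  rcases le_total α β with h | h
  · rw [min_eq_left (pow_le_pow_left₀ hα h 2)]
    have := pair_ordered α β t hα ht h h2
    linarith
  · rw [min_eq_right (pow_le_pow_left₀ hβ h 2)]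
    have := pair_ordered β α t hβ ht h h1
    linarith

lemma psd_min {ι E : Type*} [DecidableEq ι] [NormedAddCommGroup E] [InnerProductSpace ℝ E]
    (s : Finset ι) : ∀ (a : ι → ℝ), (∀ i ∈ s, 0 ≤ a i) → ∀ (v : ι → E),
    0 ≤ ∑ i ∈ s, ∑ j ∈ s, min (a i) (a j) * (inner ℝ (v i) (v j) : ℝ) := by
  induction s using Finset.strongInduction with
  | _ s ih =>
    intro a ha v
    rcases s.eq_empty_or_nonempty with rfl | hs
    · simp
    · obtain ⟨i₀, hi₀, hmin⟩ := s.exists_min_image a hs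
      have ha' : ∀ i ∈ s, 0 ≤ a i - a i₀ := fun i hi => sub_nonneg.mpr (hmin i hi)
      have e1 : ∑ i ∈ s, ∑ j ∈ s, min (a i) (a j) * (inner ℝ (v i) (v j) : ℝ)
          = a i₀ * ∑ i ∈ s, ∑ j ∈ s, (inner ℝ (v i) (v j) : ℝ)
            + ∑ i ∈ s, ∑ j ∈ s, min (a i - a i₀) (a j - a i₀) * (inner ℝ (v i) (v j) : ℝ) := by
        simp only [Finset.mul_sum]
        rw [← Finset.sum_add_distrib]
        refine Finset.sum_congr rfl fun i hi => ?_
        rw [← Finset.sum_add_distrib]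
        refine Finset.sum_congr rfl fun j hj => ?_
        have hm : min (a i) (a j) = a i₀ + min (a i - a i₀) (a j - a i₀) := by
          rcases le_total (a i) (a j) with h | h
          · rw [min_eq_left h, min_eq_left (by linarith)]; ring
          · rw [min_eq_right h, min_eq_right (by linarith)]; ring
        rw [hm]; ring
      have h2 : 0 ≤ ∑ i ∈ s, ∑ j ∈ s, (inner ℝ (v i) (v j) : ℝ) := by
        have hinner : (inner ℝ (∑ i ∈ s, v i) (∑ j ∈ s, v j) : ℝ)
            = ∑ i ∈ s, ∑ j ∈ s, (inner ℝ (v i) (v j) : ℝ) := by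
          rw [sum_inner]
          exact Finset.sum_congr rfl fun i _ => by rw [inner_sum]
        rw [← hinner]
        exact real_inner_self_nonneg
      have h3 : 0 ≤ ∑ i ∈ s, ∑ j ∈ s,
          min (a i - a i₀) (a j - a i₀) * (inner ℝ (v i) (v j) : ℝ) := by
        have hrow : ∀ i ∈ s, ∑ j ∈ s, min (a i - a i₀) (a j - a i₀) * (inner ℝ (v i) (v j) : ℝ)
            = ∑ j ∈ s.erase i₀, min (a i - a i₀) (a j - a i₀) * (inner ℝ (v i) (v j) : ℝ) := by
          intro i hi
          rw [← Finset.add_sum_erase s _ hi₀]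
          have hz : min (a i - a i₀) (a i₀ - a i₀) = 0 := by
            rw [sub_self]
            exact min_eq_right (ha' i hi)
          rw [hz, zero_mul, zero_add]
        rw [Finset.sum_congr rfl hrow, ← Finset.add_sum_erase s _ hi₀]
        have hrow0 : ∑ j ∈ s.erase i₀,
            min (a i₀ - a i₀) (a j - a i₀) * (inner ℝ (v i₀) (v j) : ℝ) = 0 := by
          refine Finset.sum_eq_zero fun j hj => ?_
          have hz : min (a i₀ - a i₀) (a j - a i₀) = 0 := by
            rw [sub_self]
            exact min_eq_left (ha' j (Finset.mem_of_mem_erase hj))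
          rw [hz, zero_mul]
        rw [hrow0, zero_add]
        exact ih (s.erase i₀) (Finset.erase_ssubset hi₀) _
          (fun i hi => ha' i (Finset.mem_of_mem_erase hi)) v
      rw [e1]
      have := mul_nonneg (ha i₀ hi₀) h2
      linarith

/-- The core `D²`-sampling bound on an uncovered cluster, with constant 5. -/
lemma main_bound (C P : Finset (EuclideanSpace ℝ (Fin d))) (hC : C.Nonempty) :
    ∑ x ∈ P, ptCost x C * setCost P (insert x C)
      ≤ 5 * opt1 P * ∑ x ∈ P, ptCost x C := by
  set μ := centroid P with hμ
  -- Step A: cost(P, C ∪ {x}) ≤ Σ_y min(ptCost y C, ‖x-y‖²)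
  have hA : ∀ x ∈ P, setCost P (insert x C)
      ≤ ∑ y ∈ P, min (ptCost y C) (‖x - y‖ ^ 2) := by
    intro x _
    refine Finset.sum_le_sum fun y _ => ?_
    refine le_min (ptCost_mono y hC (Finset.subset_insert x C)) ?_
    have := ptCost_le y (Finset.mem_insert_self x C)
    rwa [norm_sub_rev] at this
  set S1 : ℝ := ∑ x ∈ P, ∑ y ∈ P, ptCost x C * min (ptCost y C) (‖x - y‖ ^ 2) with hS1
  have step0 : ∑ x ∈ P, ptCost x C * setCost P (insert x C) ≤ S1 := by
    rw [hS1]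
    refine Finset.sum_le_sum fun x hx => ?_
    refine le_trans (mul_le_mul_of_nonneg_left (hA x hx) (ptCost_nonneg x C)) ?_
    rw [Finset.mul_sum]
  -- symmetry
  have step_sym : S1 = ∑ x ∈ P, ∑ y ∈ P, ptCost y C * min (ptCost x C) (‖x - y‖ ^ 2) := by
    rw [hS1, Finset.sum_comm]
    refine Finset.sum_congr rfl fun x _ => Finset.sum_congr rfl fun y _ => ?_
    rw [norm_sub_rev]
  -- pairwise bound
  have step_pair : ∀ x ∈ P, ∀ y ∈ P,
      ptCost x C * min (ptCost y C) (‖x - y‖ ^ 2)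
        + ptCost y C * min (ptCost x C) (‖x - y‖ ^ 2)
      ≤ 5 * (min (ptCost x C) (ptCost y C) * ‖x - y‖ ^ 2) := by
    intro x _ y _
    obtain ⟨α, hα0, hαx, hαbd⟩ := ptCost_exists_sqrt hC x
    obtain ⟨β, hβ0, hβy, hβbd⟩ := ptCost_exists_sqrt hC y
    have h1 : α ≤ β + ‖x - y‖ := by
      have := hβbd x
      rw [hαx] at this
      nlinarith [add_nonneg hβ0 (norm_nonneg (x - y))]
    have h2 : β ≤ α + ‖x - y‖ := by
      have := hαbd y
      rw [hβy, norm_sub_rev] at this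
      nlinarith [add_nonneg hα0 (norm_nonneg (x - y))]
    rw [hαx, hβy]
    exact pair_bound α β ‖x - y‖ hα0 hβ0 (norm_nonneg _) h1 h2
  set K : ℝ := ∑ x ∈ P, ∑ y ∈ P, min (ptCost x C) (ptCost y C) * ‖x - y‖ ^ 2 with hK
  have step2 : S1 + S1 ≤ 5 * K := by
    nth_rewrite 2 [step_sym]
    rw [hK]
    simp only [Finset.mul_sum]
    rw [← Finset.sum_add_distrib]
    refine Finset.sum_le_sum fun x hx => ?_
    rw [← Finset.sum_add_distrib]
    exact Finset.sum_le_sum fun y hy => step_pair x hx y hy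
  -- Step C : K ≤ 2 * (opt1 P * Σ a)
  have stepC : K ≤ 2 * (opt1 P * ∑ x ∈ P, ptCost x C) := by
    have hid : ∀ x ∈ P, ∀ y ∈ P,
        min (ptCost x C) (ptCost y C) * ‖x - y‖ ^ 2
          = min (ptCost x C) (ptCost y C) * (‖x - μ‖ ^ 2 + ‖y - μ‖ ^ 2)
            - 2 * (min (ptCost x C) (ptCost y C) * (inner ℝ (x - μ) (y - μ) : ℝ)) := by
      intro x _ y _
      have hxy : x - y = (x - μ) - (y - μ) := by abel
      have hnorm : ‖x - y‖ ^ 2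
          = ‖x - μ‖ ^ 2 - 2 * (inner ℝ (x - μ) (y - μ) : ℝ) + ‖y - μ‖ ^ 2 := by
        rw [hxy]
        exact norm_sub_sq_real _ _
      rw [hnorm]; ring
    have hKsplit : K = (∑ x ∈ P, ∑ y ∈ P,
          min (ptCost x C) (ptCost y C) * (‖x - μ‖ ^ 2 + ‖y - μ‖ ^ 2))
        - 2 * ∑ x ∈ P, ∑ y ∈ P,
          min (ptCost x C) (ptCost y C) * (inner ℝ (x - μ) (y - μ) : ℝ) := by
      rw [hK, Finset.sum_congr rfl fun x hx => Finset.sum_congr rfl fun y hy => hid x hx y hy]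
      simp only [Finset.sum_sub_distrib, Finset.mul_sum]
    have hpsd : 0 ≤ ∑ x ∈ P, ∑ y ∈ P,
        min (ptCost x C) (ptCost y C) * (inner ℝ (x - μ) (y - μ) : ℝ) :=
      psd_min P (fun z => ptCost z C) (fun z _ => ptCost_nonneg z C) (fun z => z - μ)
    have hub : ∑ x ∈ P, ∑ y ∈ P,
        min (ptCost x C) (ptCost y C) * (‖x - μ‖ ^ 2 + ‖y - μ‖ ^ 2)
        ≤ ∑ x ∈ P, ∑ y ∈ P, (ptCost y C * ‖x - μ‖ ^ 2 + ptCost x C * ‖y - μ‖ ^ 2) := by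
      refine Finset.sum_le_sum fun x _ => Finset.sum_le_sum fun y _ => ?_
      have m1 : min (ptCost x C) (ptCost y C) * ‖x - μ‖ ^ 2 ≤ ptCost y C * ‖x - μ‖ ^ 2 :=
        mul_le_mul_of_nonneg_right (min_le_right _ _) (by positivity)
      have m2 : min (ptCost x C) (ptCost y C) * ‖y - μ‖ ^ 2 ≤ ptCost x C * ‖y - μ‖ ^ 2 :=
        mul_le_mul_of_nonneg_right (min_le_left _ _) (by positivity)
      calc min (ptCost x C) (ptCost y C) * (‖x - μ‖ ^ 2 + ‖y - μ‖ ^ 2)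
          = min (ptCost x C) (ptCost y C) * ‖x - μ‖ ^ 2
            + min (ptCost x C) (ptCost y C) * ‖y - μ‖ ^ 2 := by ring
        _ ≤ ptCost y C * ‖x - μ‖ ^ 2 + ptCost x C * ‖y - μ‖ ^ 2 := add_le_add m1 m2
    have hsum2 : ∑ x ∈ P, ∑ y ∈ P,
        (ptCost y C * ‖x - μ‖ ^ 2 + ptCost x C * ‖y - μ‖ ^ 2)
        = 2 * (opt1 P * ∑ x ∈ P, ptCost x C) := by
      have hopt : opt1 P = ∑ y ∈ P, ‖y - μ‖ ^ 2 := rfl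
      simp only [Finset.sum_add_distrib, ← Finset.sum_mul, ← Finset.mul_sum]
      rw [hopt]
      ring
    linarith
  linarith

end helpers

/-- One step of `D²`-sampling does not increase `H̃` in expectation:
`Σ_{x∈X} (cost(x,C)/cost(X,C)) · H̃(P, C ∪ {x}) ≤ H̃(P, C)`. -/
theorem hTilde_supermartingale {d : ℕ}
    (X C P : Finset (EuclideanSpace ℝ (Fin d)))
    (hC : C.Nonempty) (hcost : 0 < setCost X C) (hPX : P ⊆ X) (hPne : P.Nonempty) :
    ∑ x ∈ X, (ptCost x C / setCost X C) * hTilde P (insert x C) ≤ hTilde P C := by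
  have hsumT : ∑ x ∈ X, ptCost x C = setCost X C := rfl
  suffices key : ∑ x ∈ X, ptCost x C * hTilde P (insert x C) ≤ hTilde P C * setCost X C by
    have h1 : ∑ x ∈ X, (ptCost x C / setCost X C) * hTilde P (insert x C)
        = (∑ x ∈ X, ptCost x C * hTilde P (insert x C)) / setCost X C := by
      rw [Finset.sum_div]
      exact Finset.sum_congr rfl fun x _ => div_mul_eq_mul_div _ _ _
    rw [h1, div_le_iff₀ hcost]
    exact key
  by_cases hcov : (P ∩ C).Nonempty
  · -- covered case
    have hPC : hTilde P C = setCost P C := by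
      simp only [hTilde]; rw [if_pos hcov]
    have hstep : ∀ x ∈ X, ptCost x C * hTilde P (insert x C) ≤ ptCost x C * setCost P C := by
      intro x _
      obtain ⟨z, hz⟩ := hcov
      rw [Finset.mem_inter] at hz
      have hne : (P ∩ insert x C).Nonempty :=
        ⟨z, Finset.mem_inter.mpr ⟨hz.1, Finset.mem_insert_of_mem hz.2⟩⟩
      have heq : hTilde P (insert x C) = setCost P (insert x C) := by
        simp only [hTilde]; rw [if_pos hne]
      rw [heq]
      exact mul_le_mul_of_nonneg_left
        (setCost_mono P hC (Finset.subset_insert x C)) (ptCost_nonneg x C)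
    calc ∑ x ∈ X, ptCost x C * hTilde P (insert x C)
        ≤ ∑ x ∈ X, ptCost x C * setCost P C := Finset.sum_le_sum hstep
      _ = (∑ x ∈ X, ptCost x C) * setCost P C := by rw [← Finset.sum_mul]
      _ = hTilde P C * setCost X C := by rw [hsumT, hPC]; ring
  · -- uncovered case
    have hPC : hTilde P C = 5 * opt1 P := by
      simp only [hTilde]; rw [if_neg hcov]
    have hout : ∀ x ∈ X \ P, ptCost x C * hTilde P (insert x C)
        = ptCost x C * (5 * opt1 P) := by
      intro x hx
      rw [Finset.mem_sdiff] at hx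
      have hne' : ¬ (P ∩ insert x C).Nonempty := by
        rintro ⟨z, hz⟩
        rw [Finset.mem_inter, Finset.mem_insert] at hz
        rcases hz.2 with rfl | hzc
        · exact hx.2 hz.1
        · exact hcov ⟨z, Finset.mem_inter.mpr ⟨hz.1, hzc⟩⟩
      have heq : hTilde P (insert x C) = 5 * opt1 P := by
        simp only [hTilde]; rw [if_neg hne']
      rw [heq]
    have hin : ∀ x ∈ P, ptCost x C * hTilde P (insert x C)
        = ptCost x C * setCost P (insert x C) := by
      intro x hx
      have hne : (P ∩ insert x C).Nonempty :=
        ⟨x, Finset.mem_inter.mpr ⟨hx, Finset.mem_insert_self x C⟩⟩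
      have heq : hTilde P (insert x C) = setCost P (insert x C) := by
        simp only [hTilde]; rw [if_pos hne]
      rw [heq]
    have hsplit : ∑ x ∈ X \ P, ptCost x C * hTilde P (insert x C)
        + ∑ x ∈ P, ptCost x C * hTilde P (insert x C)
        = ∑ x ∈ X, ptCost x C * hTilde P (insert x C) := Finset.sum_sdiff hPX
    have hsplita : ∑ x ∈ X \ P, ptCost x C + ∑ x ∈ P, ptCost x C
        = ∑ x ∈ X, ptCost x C := Finset.sum_sdiff hPX
    have hmain := main_bound C P hC
    have e1 : ∑ x ∈ X \ P, ptCost x C * hTilde P (insert x C)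
        = (5 * opt1 P) * ∑ x ∈ X \ P, ptCost x C := by
      rw [Finset.sum_congr rfl hout, ← Finset.sum_mul, mul_comm]
    have e2 : ∑ x ∈ P, ptCost x C * hTilde P (insert x C)
        = ∑ x ∈ P, ptCost x C * setCost P (insert x C) :=
      Finset.sum_congr rfl hin
    rw [hPC, ← hsumT, ← hsplit, ← hsplita, e1, e2]
    nlinarith [hmain]
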